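/- For the maximally correlated two-boson state |Ψ⟩ = (1/√K) Σ_{a=1}^{K} b†_a b†_a |Ω⟩ corresponding to the symmetric matrix v = (1/(√K·√2)) I, every normalized two-boson pure state |φ⟩ whose symmetric coefficient matrix has rank at most k−1 satisfies |⟨Ψ|φ⟩|² ≤ (k−1)/K; equivalently the operator W = 𝟙_s − (K/(k−1)) P_Ψ has nonnegative expectation on all such states. -/

import Mathlib

open Matrix

section Aux

private lemma euc_norm_sq_aux {m : Type*} [Fintype m] (x : EuclideanSpace ℂ m) :
    ‖x‖ ^ 2 = ∑ i, ‖x i‖ ^ 2 := by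
  rw [EuclideanSpace.norm_eq, Real.sq_sqrt (Finset.sum_nonneg fun i _ => sq_nonneg _)]

private lemma coord_expand_aux {K n : ℕ} {U : Submodule ℂ (EuclideanSpace ℂ (Fin K))}
    (b : OrthonormalBasis (Fin n) ℂ U) (d : U) (i : Fin K) :
    ((d : EuclideanSpace ℂ (Fin K))) i
      = ∑ s, b.repr d s * ((b s : EuclideanSpace ℂ (Fin K)) i) := by
  conv_lhs => rw [← b.sum_repr d]
  push_cast
  exact map_sum (EuclideanSpace.projₗ (𝕜 := ℂ) (ι := Fin K) i)
    (fun s => b.repr d s • ((b s : EuclideanSpace ℂ (Fin K)))) Finset.univ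

/-- For any complex square matrix, `|tr v|² ≤ rank v · ‖v‖²_F`. -/
private lemma abs_trace_sq_le_rank_mul (K : ℕ) (v : Matrix (Fin K) (Fin K) ℂ) :
    ‖∑ i, v i i‖ ^ 2 ≤ (v.rank : ℝ) * ∑ i, ∑ j, ‖v i j‖ ^ 2 := by
  classical
  set E := EuclideanSpace ℂ (Fin K)
  set f := Matrix.toEuclideanLin v with hf
  set U := LinearMap.range f with hU
  have hrank : v.rank = Module.finrank ℂ U := by
    rw [hU, hf, Matrix.toEuclideanLin_eq_toLin_orthonormal]
    exact Matrix.rank_eq_finrank_range_toLin v _ _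
  set n := Module.finrank ℂ U with hn
  set b := stdOrthonormalBasis ℂ U with hb
  set c : Fin K → E := fun j => f (EuclideanSpace.single j 1) with hc
  have hcmem : ∀ j, c j ∈ U := fun j => LinearMap.mem_range_self f _
  set d : Fin K → U := fun j => ⟨c j, hcmem j⟩ with hd
  have hcv : ∀ i j, c j i = v i j := by
    intro i j
    simp [hc, hf, Matrix.toEuclideanLin_apply, Matrix.mulVec_single]
  set S : Fin n → ℝ := fun s => ∑ j, ‖b.repr (d j) s‖ ^ 2 with hS
  have hSnonneg : ∀ s, 0 ≤ S s := fun s => Finset.sum_nonneg fun j _ => sq_nonneg _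
  have hbnorm : ∀ s : Fin n, (∑ j, ‖(b s : E) j‖ ^ 2) = 1 := by
    intro s
    have h1 : ‖(b s : E)‖ = 1 := by
      rw [Submodule.norm_coe]; exact b.orthonormal.1 s
    rw [← euc_norm_sq_aux, h1, one_pow]
  have htr : ‖∑ i, v i i‖ ≤ ∑ s, Real.sqrt (S s) := by
    have h1 : (∑ i, v i i) = ∑ s, ∑ j, b.repr (d j) s * (b s : E) j := by
      rw [Finset.sum_comm]
      refine Finset.sum_congr rfl fun j _ => ?_
      rw [← hcv j j, show c j = (d j : E) from rfl, coord_expand_aux]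
    rw [h1]
    refine le_trans (norm_sum_le _ _) (Finset.sum_le_sum fun s _ => ?_)
    refine le_trans (norm_sum_le _ _) ?_
    have hcs : (∑ j, ‖b.repr (d j) s * (b s : E) j‖) ^ 2
        ≤ (∑ j, ‖b.repr (d j) s‖ ^ 2) * (∑ j, ‖(b s : E) j‖ ^ 2) := by
      have := Finset.sum_mul_sq_le_sq_mul_sq Finset.univ
          (fun j => ‖b.repr (d j) s‖) (fun j => ‖(b s : E) j‖)
      simpa [norm_mul] using this
    rw [hbnorm s, mul_one] at hcs
    have h0 : 0 ≤ ∑ j, ‖b.repr (d j) s * (b s : E) j‖ :=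
      Finset.sum_nonneg fun j _ => norm_nonneg _
    calc (∑ j, ‖b.repr (d j) s * (b s : E) j‖)
        = Real.sqrt ((∑ j, ‖b.repr (d j) s * (b s : E) j‖) ^ 2) :=
          (Real.sqrt_sq h0).symm
      _ ≤ Real.sqrt (S s) := Real.sqrt_le_sqrt hcs
  have hpars : (∑ s, S s) = ∑ i, ∑ j, ‖v i j‖ ^ 2 := by
    rw [Finset.sum_comm (s := (Finset.univ : Finset (Fin K)))]
    calc (∑ s, S s) = ∑ j, ∑ s, ‖b.repr (d j) s‖ ^ 2 := by
          simp only [hS]; exact Finset.sum_comm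
      _ = ∑ j, ∑ i, ‖v i j‖ ^ 2 := by
          refine Finset.sum_congr rfl fun j _ => ?_
          have h1 : (∑ s, ‖b.repr (d j) s‖ ^ 2) = ‖b.repr (d j)‖ ^ 2 :=
            (euc_norm_sq_aux _).symm
          rw [h1, b.repr.norm_map, ← Submodule.norm_coe,
            show ((d j : E)) = c j from rfl, euc_norm_sq_aux]
          exact Finset.sum_congr rfl fun i _ => by rw [hcv]
  have h2 : (∑ s, Real.sqrt (S s)) ^ 2 ≤ (n : ℝ) * ∑ s, S s := by
    have := sq_sum_le_card_mul_sum_sq (s := (Finset.univ : Finset (Fin n)))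
      (f := fun s => Real.sqrt (S s))
    simpa [Real.sq_sqrt (hSnonneg _)] using this
  have h3 : ‖∑ i, v i i‖ ^ 2 ≤ (∑ s, Real.sqrt (S s)) ^ 2 :=
    pow_le_pow_left₀ (norm_nonneg _) htr 2
  calc ‖∑ i, v i i‖ ^ 2 ≤ (∑ s, Real.sqrt (S s)) ^ 2 := h3
    _ ≤ (n : ℝ) * ∑ s, S s := h2
    _ = (v.rank : ℝ) * ∑ i, ∑ j, ‖v i j‖ ^ 2 := by rw [hpars, hrank]

end Aux

/-- for the maximally correlated two-boson state
`|Ψ⟩ = (1/√K) Σ b†_a b†_a |Ω⟩`, with coefficient matrix `(1/(√K √2)) I`, every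
normalized two-boson state whose symmetric coefficient matrix `v` has rank at most
`k−1` satisfies `|⟨Ψ|φ⟩|² ≤ (k−1)/K`; equivalently the witness
`W = 𝟙_s − (K/(k−1)) P_Ψ` has nonnegative expectation on all such states. -/
theorem bosonic_slater_witness_bound
    (K k : ℕ) (hK : 1 ≤ K) (hk : 2 ≤ k)
    (v : Matrix (Fin K) (Fin K) ℂ) (hv : vᵀ = v)
    (hnorm : (∑ i, ∑ j, ‖v i j‖ ^ 2) = 1 / 2)
    (hrank : v.rank ≤ k - 1) :
    ‖2 * ∑ i, ∑ j,
        (starRingEnd ℂ)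
          (if i = j then (((Real.sqrt K * Real.sqrt 2)⁻¹ : ℝ) : ℂ) else 0) * v i j‖ ^ 2
      ≤ ((k : ℝ) - 1) / K := by
  have hK0 : (0 : ℝ) < K := by exact_mod_cast hK
  set cc : ℝ := (Real.sqrt K * Real.sqrt 2)⁻¹ with hcc
  have hccnn : 0 ≤ cc := inv_nonneg.2 (mul_nonneg (Real.sqrt_nonneg _) (Real.sqrt_nonneg _))
  have hsum : (∑ i, ∑ j, (starRingEnd ℂ)
        (if i = j then ((cc : ℝ) : ℂ) else 0) * v i j)
      = ((cc : ℝ) : ℂ) * ∑ i, v i i := by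
    rw [Finset.mul_sum]
    refine Finset.sum_congr rfl fun i _ => ?_
    rw [Finset.sum_eq_single i]
    · simp
    · intro j _ hji; simp [Ne.symm hji]
    · simp
  rw [hsum]
  have habs : ‖2 * (((cc : ℝ) : ℂ) * ∑ i, v i i)‖
      = 2 * cc * ‖∑ i, v i i‖ := by
    simp [_root_.map_mul, Complex.norm_real, abs_of_nonneg hccnn, mul_assoc]
  rw [habs]
  have hc2 : cc ^ 2 = (2 * (K : ℝ))⁻¹ := by
    rw [hcc, inv_pow, mul_pow, Real.sq_sqrt (Nat.cast_nonneg K),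
      Real.sq_sqrt (by norm_num : (0:ℝ) ≤ 2)]
    ring
  have hrankR : (v.rank : ℝ) ≤ (k : ℝ) - 1 := by
    have h1 : ((v.rank : ℝ)) ≤ ((k - 1 : ℕ) : ℝ) := by exact_mod_cast hrank
    rwa [Nat.cast_sub (by omega : 1 ≤ k), Nat.cast_one] at h1
  have hT : ‖∑ i, v i i‖ ^ 2 ≤ ((k : ℝ) - 1) / 2 := by
    calc ‖∑ i, v i i‖ ^ 2
        ≤ (v.rank : ℝ) * ∑ i, ∑ j, ‖v i j‖ ^ 2 :=
          abs_trace_sq_le_rank_mul K v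
      _ = (v.rank : ℝ) * (1 / 2) := by rw [hnorm]
      _ ≤ ((k : ℝ) - 1) * (1 / 2) := by
          exact mul_le_mul_of_nonneg_right hrankR (by norm_num)
      _ = ((k : ℝ) - 1) / 2 := by ring
  have hexpand : (2 * cc * ‖∑ i, v i i‖) ^ 2
      = (2 / (K : ℝ)) * ‖∑ i, v i i‖ ^ 2 := by
    have : (2 * cc * ‖∑ i, v i i‖) ^ 2
        = 4 * cc ^ 2 * ‖∑ i, v i i‖ ^ 2 := by ring
    rw [this, hc2]
    field_simp
    ring
  rw [hexpand]
  calc (2 / (K : ℝ)) * ‖∑ i, v i i‖ ^ 2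
      ≤ (2 / (K : ℝ)) * (((k : ℝ) - 1) / 2) :=
        mul_le_mul_of_nonneg_left hT (by positivity)
    _ = ((k : ℝ) - 1) / K := by field_simp
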